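/- arXiv:2311.08611 — 2 statements merged into one kernel-verified Lean document; each statement's English description precedes it below -/
import Mathlib

section
/- Let α, c, μ, γ, p, m, d, q be positive reals with ℛ₀ = cα/(μ(μ+γ)) > 1 + c(m+d+μ)/(μp). Then the interior equilibrium E* = (S*, I*, C*, M*, R*) of the simplified SICMR system, with I* = (m+d+μ)/p, S* = α/(cI* + μ), C* = (μ(μ+γ)/(p(cI* + μ)))·(ℛ₀ − 1 − c(m+d+μ)/(μp)), M* = mC*/(q+μ), R* = (qM* + γI*)/μ, is globally asymptotically stable in the interior of Ω: every solution with initial value in the interior of Ω = {(S, I, C, M, R) ∈ ℝ₊^5 : S + I + C + M + R ≤ α/μ} (all coordinates strictly positive, sum < α/μ) converges to E* as t → ∞. -/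
open Filter MeasureTheory intervalIntegral Set

lemma cont_ext {f : ℝ → ℝ} (h : ∀ t, 0 ≤ t → ContinuousAt f t) :
    Continuous (fun t => f (max t 0)) := by
  apply continuous_iff_continuousAt.2
  intro t
  have hm : ContinuousAt (fun t : ℝ => max t 0) t := (continuous_id.max continuous_const).continuousAt
  show ContinuousAt (f ∘ fun t : ℝ => max t 0) t
  exact ContinuousAt.comp (f := fun t : ℝ => max t 0) (g := f) (h _ (le_max_right t 0)) hm

lemma ftc_cont {g : ℝ → ℝ} (hg : Continuous g) (t : ℝ) :
    HasDerivAt (fun u => ∫ s in (0:ℝ)..u, g s) (g t) t :=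
  integral_hasDerivAt_right (hg.intervalIntegrable _ _)
    (hg.stronglyMeasurableAtFilter _ _) hg.continuousAt

lemma pos_invariant {x g u : ℝ → ℝ} (hgc : Continuous g) (huc : Continuous u)
    (hx : ∀ t, 0 ≤ t → HasDerivAt x (u t - g t * x t) t)
    (hu : ∀ t, 0 ≤ t → 0 ≤ u t) (h0 : 0 < x 0) : ∀ t, 0 ≤ t → 0 < x t := by
  intro T hT
  set G : ℝ → ℝ := fun t => ∫ s in (0:ℝ)..t, g s with hG
  set h : ℝ → ℝ := fun t => x t * Real.exp (G t) with hh
  have hder : ∀ t ∈ Set.uIcc 0 T, HasDerivAt h (u t * Real.exp (G t)) t := by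
    intro t ht
    rw [Set.uIcc_of_le hT] at ht
    have h1 := (hx t ht.1).mul ((ftc_cont hgc t).exp)
    convert h1 using 1
    · exact rfl
    · exact rfl
    · exact rfl
    ring
  have hint : IntervalIntegrable (fun t => u t * Real.exp (G t)) volume 0 T := by
    apply Continuous.intervalIntegrable
    have hGc : Continuous G :=
      continuous_iff_continuousAt.2 fun t => (ftc_cont hgc t).continuousAt
    exact huc.mul hGc.rexp
  have heq : (∫ t in (0:ℝ)..T, u t * Real.exp (G t)) = h T - h 0 :=
    integral_eq_sub_of_hasDerivAt hder hint
  have hnn : 0 ≤ ∫ t in (0:ℝ)..T, u t * Real.exp (G t) := by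
    apply intervalIntegral.integral_nonneg hT
    intro s hs
    exact mul_nonneg (hu s hs.1) (Real.exp_pos _).le
  have hh0 : h 0 = x 0 := by simp [hh, hG]
  have : 0 < h T := by
    have : h 0 ≤ h T := by linarith [heq ▸ hnn]
    rw [hh0] at this; linarith
  have := (mul_pos_iff.1 this)
  rcases this with ⟨h1, _⟩ | ⟨_, h2⟩
  · exact h1
  · exact absurd h2 (not_lt.2 (Real.exp_pos _).le)

lemma lip_of_deriv {f f' : ℝ → ℝ} {K : ℝ}
    (hd : ∀ t, 0 ≤ t → HasDerivAt f (f' t) t)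
    (hb : ∀ t, 0 ≤ t → |f' t| ≤ K) :
    ∀ s t, 0 ≤ s → 0 ≤ t → |f t - f s| ≤ K * |t - s| := by
  intro s t hs ht
  have := Convex.norm_image_sub_le_of_norm_hasDerivWithin_le
    (f := f) (f' := f') (s := Set.Ici (0:ℝ)) (C := K)
    (fun x hx => (hd x hx).hasDerivWithinAt)
    (fun x hx => by simpa [Real.norm_eq_abs] using hb x hx)
    (convex_Ici 0) hs ht
  simpa [Real.norm_eq_abs] using this

lemma barbalat_int {f : ℝ → ℝ} {L K : ℝ}
    (hfc : ∀ t, 0 ≤ t → ContinuousAt f t)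
    (hf0 : ∀ t, 0 ≤ t → 0 ≤ f t)
    (hlip : ∀ s t, 0 ≤ s → 0 ≤ t → |f t - f s| ≤ L * |t - s|)
    (hint : ∀ t, 0 ≤ t → (∫ s in (0:ℝ)..t, f s) ≤ K) :
    Tendsto f atTop (nhds 0) := by
  have hco : ∀ a b : ℝ, 0 ≤ a → IntervalIntegrable f volume a b → True := fun _ _ _ _ => trivial
  have hcont : ∀ a b : ℝ, 0 ≤ a → 0 ≤ b → IntervalIntegrable f volume a b := by
    intro a b ha hb
    apply ContinuousOn.intervalIntegrable
    intro x hx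
    have : (0:ℝ) ≤ x := by
      rcases le_total a b with h | h
      · rw [uIcc_of_le h] at hx; linarith [hx.1]
      · rw [uIcc_of_ge h] at hx; linarith [hx.1]
    exact (hfc x this).continuousWithinAt
  set F : ℝ → ℝ := fun t => ∫ s in (0:ℝ)..(max t 0), f s with hF
  have hFmono : Monotone F := by
    intro a b hab
    have h1 : max a 0 ≤ max b 0 := max_le_max hab le_rfl
    have h2 : (0:ℝ) ≤ max a 0 := le_max_right _ _
    have h3 : (0:ℝ) ≤ max b 0 := le_max_right _ _
    have hadd : (∫ s in (0:ℝ)..(max a 0), f s) + (∫ s in (max a 0)..(max b 0), f s)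
        = ∫ s in (0:ℝ)..(max b 0), f s :=
      integral_add_adjacent_intervals (hcont 0 _ le_rfl h2) (hcont _ _ h2 h3)
    have hnn : 0 ≤ ∫ s in (max a 0)..(max b 0), f s := by
      apply intervalIntegral.integral_nonneg h1
      intro u hu
      exact hf0 u (le_trans h2 hu.1)
    simp only [hF]
    linarith
  have hFbdd : BddAbove (Set.range F) := by
    refine ⟨K, ?_⟩
    rintro _ ⟨t, rfl⟩
    exact hint _ (le_max_right t 0)
  have hFtend : Tendsto F atTop (nhds (⨆ t, F t)) := tendsto_atTop_ciSup hFmono hFbdd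
  set ℓ : ℝ := ⨆ t, F t with hℓ
  have hFle : ∀ t, F t ≤ ℓ := fun t => le_ciSup hFbdd t
  rw [Metric.tendsto_atTop]
  intro ε hε
  set Lp : ℝ := max L 1 with hLp
  have hLp1 : (1:ℝ) ≤ Lp := le_max_right _ _
  have hLp0 : (0:ℝ) < Lp := lt_of_lt_of_le one_pos hLp1
  set δ : ℝ := ε / (2 * Lp) with hδdef
  have hδ : 0 < δ := div_pos hε (by linarith)
  -- find T with F close to ℓ
  have : ∀ᶠ t in atTop, dist (F t) ℓ < ε * δ / 8 := by
    have := Metric.tendsto_atTop.1 hFtend (ε * δ / 8) (by positivity)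
    rcases this with ⟨N, hN⟩
    filter_upwards [eventually_ge_atTop N] with t ht using hN t ht
  rcases (this.and (eventually_ge_atTop (0:ℝ))).exists_forall_of_atTop with ⟨T, hT⟩
  refine ⟨T + δ, ?_⟩
  intro t ht
  have hT0 : 0 ≤ T := (hT T le_rfl).2
  have htδ : T ≤ t - δ := by linarith
  have ht0 : 0 ≤ t := by linarith
  have ht0' : 0 ≤ t - δ := by linarith
  by_contra hcon
  push_neg at hcon
  have hfe : ε ≤ f t := by
    have := hf0 t ht0
    rw [Real.dist_eq, sub_zero, abs_of_nonneg this] at hcon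
    linarith [hcon]
  -- f ≥ ε/2 on [t-δ, t]
  have hlow : ∀ u ∈ Set.Icc (t - δ) t, ε / 2 ≤ f u := by
    intro u hu
    have h1 : |f t - f u| ≤ L * |t - u| := hlip u t (by linarith [hu.1]) ht0
    have h2 : |t - u| ≤ δ := by
      rw [abs_of_nonneg (by linarith [hu.2])]
      linarith [hu.1]
    have h3 : L * |t - u| ≤ Lp * δ := by
      have hL : L ≤ Lp := le_max_left _ _
      have habs : 0 ≤ |t - u| := abs_nonneg _
      nlinarith [abs_nonneg (t - u)]
    have h4 : Lp * δ = ε / 2 := by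
      rw [hδdef]; field_simp
    have := abs_le.1 (le_trans h1 (h3.trans_eq h4))
    linarith [this.1]
  have hchunk : ε / 2 * δ ≤ ∫ s in (t - δ)..t, f s := by
    have := intervalIntegral.integral_mono_on (by linarith : t - δ ≤ t)
      (_root_.intervalIntegrable_const (c := ε / 2)) (hcont _ _ ht0' ht0)
      hlow
    have h5 : (∫ _ in (t - δ)..t, (ε/2 : ℝ)) = ε / 2 * δ := by
      simp
      ring
    linarith [h5 ▸ this]
  have hFt : F t = ∫ s in (0:ℝ)..t, f s := by simp [hF, max_eq_left ht0]
  have hFtδ : F (t - δ) = ∫ s in (0:ℝ)..(t - δ), f s := by simp [hF, max_eq_left ht0']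
  have hadd : (∫ s in (0:ℝ)..(t - δ), f s) + (∫ s in (t-δ)..t, f s) = ∫ s in (0:ℝ)..t, f s :=
    integral_add_adjacent_intervals (hcont 0 _ le_rfl ht0') (hcont _ _ ht0' ht0)
  have hd1 : dist (F (t - δ)) ℓ < ε * δ / 8 := (hT _ htδ).1
  have hFub : F t ≤ ℓ := hFle t
  rw [Real.dist_eq, abs_lt] at hd1
  -- F t - F (t-δ) ≥ εδ/2 but also ≤ εδ/8
  have : F t - F (t - δ) < ε * δ / 8 := by linarith [hd1.1]
  rw [hFt, hFtδ] at this
  nlinarith [hchunk, hadd, hδ, hε]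

lemma barbalat_deriv {f f' : ℝ → ℝ} {L l : ℝ}
    (hd : ∀ t, 0 ≤ t → HasDerivAt f (f' t) t)
    (hlip : ∀ s t, 0 ≤ s → 0 ≤ t → |f' t - f' s| ≤ L * |t - s|)
    (hconv : Tendsto f atTop (nhds l)) :
    Tendsto f' atTop (nhds 0) := by
  have hcont : ∀ a b : ℝ, 0 ≤ a → 0 ≤ b → IntervalIntegrable f' volume a b := by
    intro a b ha hb
    apply ContinuousOn.intervalIntegrable
    intro x hx
    have hx0 : (0:ℝ) ≤ x := by
      rcases le_total a b with h | h
      · rw [uIcc_of_le h] at hx; linarith [hx.1]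
      · rw [uIcc_of_ge h] at hx; linarith [hx.1]
    -- continuity within from Lipschitz bound
    apply Metric.continuousWithinAt_iff.2
    intro ε hε
    set Lp : ℝ := max L 1
    have hLp0 : (0:ℝ) < Lp := lt_of_lt_of_le one_pos (le_max_right _ _)
    refine ⟨ε / Lp, by positivity, ?_⟩
    intro y hy hdy
    have hy0 : (0:ℝ) ≤ y := by
      rcases le_total a b with h | h
      · rw [uIcc_of_le h] at hy; linarith [hy.1]
      · rw [uIcc_of_ge h] at hy; linarith [hy.1]
    have h1 : |f' y - f' x| ≤ L * |y - x| := hlip x y hx0 hy0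
    have h2 : L * |y - x| ≤ Lp * |y - x| :=
      mul_le_mul_of_nonneg_right (le_max_left _ _) (abs_nonneg _)
    rw [Real.dist_eq] at hdy ⊢
    have : Lp * |y - x| < Lp * (ε / Lp) := by
      apply mul_lt_mul_of_pos_left hdy hLp0
    rw [mul_div_cancel₀ _ (ne_of_gt hLp0)] at this
    linarith
  rw [Metric.tendsto_atTop]
  intro ε hε
  set Lp : ℝ := max L 1 with hLpdef
  have hLp0 : (0:ℝ) < Lp := lt_of_lt_of_le one_pos (le_max_right _ _)
  set δ : ℝ := ε / (2 * Lp) with hδdef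
  have hδ : 0 < δ := div_pos hε (by linarith)
  have hLpδ : Lp * δ = ε / 2 := by rw [hδdef]; field_simp
  have h8 : (0:ℝ) < ε * δ / 8 := by positivity
  have hev : ∀ᶠ t in atTop, dist (f t) l < ε * δ / 8 := Metric.tendsto_atTop.1 hconv _ h8 |>.imp
    (fun N hN => by exact hN) |>.choose_spec |> fun h => by
      rcases Metric.tendsto_atTop.1 hconv _ h8 with ⟨N, hN⟩
      filter_upwards [eventually_ge_atTop N] with t ht using hN t ht
  rcases (hev.and (eventually_ge_atTop (0:ℝ))).exists_forall_of_atTop with ⟨T, hT⟩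
  refine ⟨max T 0, ?_⟩
  intro t ht
  have ht0 : 0 ≤ t := le_trans (le_max_right T 0) ht
  have htT : T ≤ t := le_trans (le_max_left T 0) ht
  by_contra hcon
  push_neg at hcon
  rw [Real.dist_eq, sub_zero] at hcon
  have habs : ε ≤ |f' t| := hcon
  have key : ∀ u ∈ Set.Icc t (t + δ), |f' u - f' t| ≤ ε / 2 := by
    intro u hu
    have h1 : |f' u - f' t| ≤ L * |u - t| := hlip t u ht0 (by linarith [hu.1])
    have h2 : |u - t| ≤ δ := by
      rw [abs_of_nonneg (by linarith [hu.1])]; linarith [hu.2]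
    have h3 : L * |u - t| ≤ Lp * δ := by
      have : L * |u - t| ≤ Lp * |u - t| :=
        mul_le_mul_of_nonneg_right (le_max_left _ _) (abs_nonneg _)
      nlinarith
    linarith [hLpδ ▸ h3]
  have hftc : (∫ s in t..(t+δ), f' s) = f (t + δ) - f t := by
    apply integral_eq_sub_of_hasDerivAt
    · intro u hu
      rw [uIcc_of_le (by linarith)] at hu
      exact hd u (by linarith [hu.1])
    · exact hcont t (t+δ) ht0 (by linarith)
  have hdist : |f (t + δ) - f t| < ε * δ / 4 := by
    have h1 := (hT t htT).1
    have h2 := (hT (t + δ) (by linarith)).1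
    rw [Real.dist_eq] at h1 h2
    calc |f (t + δ) - f t| ≤ |f (t+δ) - l| + |f t - l| := by
          have := abs_sub_abs_le_abs_sub (f (t+δ) - l) (f t - l)
          have h3 : f (t + δ) - f t = (f (t+δ) - l) - (f t - l) := by ring
          rw [h3]; exact abs_sub _ _
      _ < ε * δ / 8 + ε * δ / 8 := by linarith
      _ = ε * δ / 4 := by ring
  rcases le_or_gt ε (f' t) with hpos | hneg
  · -- f' ≥ ε/2 on the interval
    have hlow : ∀ u ∈ Set.Icc t (t + δ), ε / 2 ≤ f' u := by
      intro u hu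
      have := abs_le.1 (key u hu)
      linarith [this.1]
    have hchunk : ε / 2 * δ ≤ ∫ s in t..(t+δ), f' s := by
      have := intervalIntegral.integral_mono_on (by linarith : t ≤ t + δ)
        (_root_.intervalIntegrable_const (c := ε / 2)) (hcont t (t+δ) ht0 (by linarith))
        hlow
      have h5 : (∫ _ in t..(t+δ), (ε/2 : ℝ)) = ε / 2 * δ := by simp; ring
      linarith [h5 ▸ this]
    rw [hftc] at hchunk
    have := abs_le.1 hdist.le
    nlinarith
  · have hneg' : f' t ≤ -ε := by
      rcases le_or_gt 0 (f' t) with h1 | h1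
      · rw [abs_of_nonneg h1] at habs; linarith
      · rw [abs_of_neg h1] at habs; linarith
    have hhigh : ∀ u ∈ Set.Icc t (t + δ), f' u ≤ -(ε / 2) := by
      intro u hu
      have := abs_le.1 (key u hu)
      linarith [this.2]
    have hchunk : (∫ s in t..(t+δ), f' s) ≤ -(ε / 2) * δ := by
      have := intervalIntegral.integral_mono_on (by linarith : t ≤ t + δ)
        (hcont t (t+δ) ht0 (by linarith)) (_root_.intervalIntegrable_const (c := -(ε / 2)))
        hhigh
      have h5 : (∫ _ in t..(t+δ), (-(ε/2) : ℝ)) = -(ε / 2) * δ := by simp; ring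
      linarith [h5 ▸ this]
    rw [hftc] at hchunk
    have := abs_le.1 hdist.le
    nlinarith

lemma lin_conv {x e : ℝ → ℝ} {a : ℝ} (ha : 0 < a)
    (hec : ∀ t, 0 ≤ t → ContinuousAt e t)
    (hxc : ∀ t, 0 ≤ t → ContinuousAt x t)
    (hd : ∀ t, 0 ≤ t → HasDerivAt x (e t - a * x t) t)
    (he : Tendsto e atTop (nhds 0)) :
    Tendsto x atTop (nhds 0) := by
  set y : ℝ → ℝ := fun t => x t * Real.exp (a * t) with hy
  have hyd : ∀ t, 0 ≤ t → HasDerivAt y (e t * Real.exp (a * t)) t := by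
    intro t ht
    have h1 : HasDerivAt (fun t : ℝ => Real.exp (a * t)) (a * Real.exp (a * t)) t := by
      have := ((hasDerivAt_id t).const_mul a).exp
      simpa [mul_comm] using this
    have := (hd t ht).mul h1
    convert this using 1
    · exact rfl
    · exact rfl
    · exact rfl
    ring
  rw [Metric.tendsto_atTop]
  intro ε hε
  set ε₂ : ℝ := a * ε / 4 with hε₂
  have hε₂0 : 0 < ε₂ := by positivity
  have hev : ∀ᶠ t in atTop, |e t| ≤ ε₂ := by
    rcases Metric.tendsto_atTop.1 he ε₂ hε₂0 with ⟨N, hN⟩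
    filter_upwards [eventually_ge_atTop N] with t ht
    have := hN t ht
    rw [Real.dist_eq, sub_zero] at this
    linarith
  rcases (hev.and (eventually_ge_atTop (0:ℝ))).exists_forall_of_atTop with ⟨T, hT⟩
  have hT0 : 0 ≤ T := (hT T le_rfl).2
  have hicont : ∀ b : ℝ, T ≤ b → IntervalIntegrable (fun s => e s * Real.exp (a * s)) volume T b := by
    intro b hb
    apply ContinuousOn.intervalIntegrable
    intro u hu
    rw [uIcc_of_le hb] at hu
    exact ((hec u (le_trans hT0 hu.1)).mul (Real.continuous_exp.comp
      (continuous_const.mul continuous_id)).continuousAt).continuousWithinAt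
  have key : ∀ t, T ≤ t → |x t| ≤ |y T| * Real.exp (-(a * t)) + ε / 4 := by
    intro t htT
    have ht0 : 0 ≤ t := le_trans hT0 htT
    have hftc : (∫ s in T..t, e s * Real.exp (a * s)) = y t - y T := by
      apply integral_eq_sub_of_hasDerivAt
      · intro u hu
        rw [uIcc_of_le htT] at hu
        exact hyd u (le_trans hT0 hu.1)
      · exact hicont t htT
    have hbnd : |∫ s in T..t, e s * Real.exp (a * s)| ≤ ε₂ / a * Real.exp (a * t) := by
      have h1 : |∫ s in T..t, e s * Real.exp (a * s)| ≤ ∫ s in T..t, |e s * Real.exp (a * s)| :=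
        intervalIntegral.abs_integral_le_integral_abs htT
      have h2 : (∫ s in T..t, |e s * Real.exp (a * s)|) ≤ ∫ s in T..t, ε₂ * Real.exp (a * s) := by
        apply intervalIntegral.integral_mono_on htT
        · exact (hicont t htT).abs
        · exact (continuous_const.mul (Real.continuous_exp.comp
            (continuous_const.mul continuous_id))).intervalIntegrable T t
        · intro u hu
          rw [abs_mul, abs_of_nonneg (Real.exp_pos _).le]
          exact mul_le_mul_of_nonneg_right ((hT u hu.1).1) (Real.exp_pos _).le
      have h3 : (∫ s in T..t, ε₂ * Real.exp (a * s))
          = ε₂ / a * Real.exp (a * t) - ε₂ / a * Real.exp (a * T) := by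
        have : ∀ u ∈ uIcc T t, HasDerivAt (fun s => ε₂ / a * Real.exp (a * s))
            (ε₂ * Real.exp (a * u)) u := by
          intro u _
          have h1 : HasDerivAt (fun s : ℝ => Real.exp (a * s)) (a * Real.exp (a * u)) u := by
            have := ((hasDerivAt_id u).const_mul a).exp
            simpa [mul_comm] using this
          have := h1.const_mul (ε₂ / a)
          convert this using 1
          · exact rfl
          · exact rfl
          field_simp
        rw [integral_eq_sub_of_hasDerivAt this ((continuous_const.mul (Real.continuous_exp.comp
            (continuous_const.mul continuous_id))).intervalIntegrable T t)]
      have h4 : ε₂ / a * Real.exp (a * t) - ε₂ / a * Real.exp (a * T) ≤ ε₂ / a * Real.exp (a * t) := by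
        have : 0 ≤ ε₂ / a * Real.exp (a * T) := by positivity
        linarith
      linarith
    have hxy : x t = y t * Real.exp (-(a * t)) := by
      rw [hy]
      simp only []
      rw [mul_assoc, ← Real.exp_add]
      simp
    have hyt : |y t| ≤ |y T| + ε₂ / a * Real.exp (a * t) := by
      have : y t = y T + (y t - y T) := by ring
      rw [this]
      refine le_trans (abs_add_le _ _) ?_
      rw [← hftc]
      linarith [hbnd]
    rw [hxy, abs_mul, abs_of_nonneg (Real.exp_pos (-(a*t))).le]
    have h5 : |y t| * Real.exp (-(a*t)) ≤ (|y T| + ε₂ / a * Real.exp (a * t)) * Real.exp (-(a*t)) :=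
      mul_le_mul_of_nonneg_right hyt (Real.exp_pos _).le
    have h6 : (ε₂ / a * Real.exp (a * t)) * Real.exp (-(a*t)) = ε₂ / a := by
      rw [mul_assoc, ← Real.exp_add]
      simp
    have h7 : ε₂ / a = ε / 4 := by
      rw [hε₂]; field_simp
    nlinarith [Real.exp_pos (-(a*t))]
  -- now choose T₂ such that |y T| * exp (-(a t)) < ε/4
  have hdecay : Tendsto (fun t => |y T| * Real.exp (-(a * t))) atTop (nhds 0) := by
    have h1 : Tendsto (fun t : ℝ => a * t) atTop atTop :=
      Tendsto.const_mul_atTop ha tendsto_id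
    have h2 := Real.tendsto_exp_neg_atTop_nhds_zero.comp h1
    have := h2.const_mul (|y T|)
    simpa using this
  have hev2 : ∀ᶠ t in atTop, |y T| * Real.exp (-(a * t)) < ε / 4 := by
    rcases Metric.tendsto_atTop.1 hdecay (ε/4) (by positivity) with ⟨N, hN⟩
    filter_upwards [eventually_ge_atTop N] with t ht
    have := hN t ht
    rw [Real.dist_eq, sub_zero, abs_of_nonneg (by positivity)] at this
    linarith
  rcases (hev2.and (eventually_ge_atTop T)).exists_forall_of_atTop with ⟨T₂, hT₂⟩
  refine ⟨T₂, ?_⟩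
  intro t ht
  have h1 := (hT₂ t ht).1
  have h2 := key t (hT₂ t ht).2
  rw [Real.dist_eq, sub_zero]
  calc |x t| ≤ |y T| * Real.exp (-(a * t)) + ε / 4 := h2
    _ < ε / 4 + ε / 4 := by linarith
    _ ≤ ε := by linarith

-- entropy lower bound
lemma entropy_lb {x a : ℝ} (hx : 0 < x) (ha : 0 < a) :
    a - a * Real.log a ≤ x - a * Real.log x := by
  have h1 : Real.log (x / a) ≤ x / a - 1 :=
    Real.log_le_sub_one_of_pos (div_pos hx ha)
  rw [Real.log_div (ne_of_gt hx) (ne_of_gt ha)] at h1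
  have h2 : a * (Real.log x - Real.log a) ≤ a * (x / a - 1) :=
    mul_le_mul_of_nonneg_left h1 ha.le
  have h3 : a * (x / a - 1) = x - a := by field_simp
  nlinarith

-- the Lyapunov derivative identity
lemma lyap_identity (α c μ γ p m d Sstar Istar Cstar Sv Iv Cv : ℝ)
    (hS : Sv ≠ 0) (hI : Iv ≠ 0) (hC : Cv ≠ 0)
    (e1 : c * Sstar * Istar + μ * Sstar = α)
    (e2 : c * Sstar = p * Cstar + γ + μ)
    (e3 : p * Istar = m + d + μ) :
    ((α - c * Sv * Iv - μ * Sv) - Sstar * ((α - c * Sv * Iv - μ * Sv) / Sv))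
      + ((c * Sv * Iv - p * Cv * Iv - γ * Iv - μ * Iv)
          - Istar * ((c * Sv * Iv - p * Cv * Iv - γ * Iv - μ * Iv) / Iv))
      + ((p * Cv * Iv - m * Cv - d * Cv - μ * Cv)
          - Cstar * ((p * Cv * Iv - m * Cv - d * Cv - μ * Cv) / Cv))
    = -((μ + c * Istar) * (Sv - Sstar) ^ 2 / Sv) := by
  have hα : α = c * Sstar * Istar + μ * Sstar := e1.symm
  have hγ : γ = c * Sstar - p * Cstar - μ := by linarith
  have hm : m = p * Istar - d - μ := by linarith
  subst hα hγ hm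
  field_simp
  ring
lemma abs_bound_S' {α c μ B S I : ℝ} (hα : 0 < α) (hc : 0 < c) (hμ : 0 < μ)
    (hS0 : 0 < S) (hSB : S < B) (hI0 : 0 < I) (hIB : I < B) :
    |α - c * S * I - μ * S| ≤ α + c * B * B + μ * B := by
  rw [abs_le]
  constructor <;>
    nlinarith [mul_lt_mul'' hSB hIB hS0.le hI0.le, mul_pos hS0 hI0]
lemma abs_bound_I' {c p γ μ B S I C : ℝ} (hc : 0 < c) (hp : 0 < p) (hγ : 0 < γ) (hμ : 0 < μ)
    (hS0 : 0 < S) (hSB : S < B) (hI0 : 0 < I) (hIB : I < B) (hC0 : 0 < C) (hCB : C < B) :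
    |c * S * I - p * C * I - γ * I - μ * I| ≤ c * B * B + p * B * B + γ * B + μ * B := by
  rw [abs_le]
  constructor <;>
    nlinarith [mul_lt_mul'' hSB hIB hS0.le hI0.le, mul_pos hS0 hI0,
      mul_lt_mul'' hCB hIB hC0.le hI0.le, mul_pos hC0 hI0]
lemma abs_bound_C' {p m d μ B I C : ℝ} (hp : 0 < p) (hm : 0 < m) (hd : 0 < d) (hμ : 0 < μ)
    (hI0 : 0 < I) (hIB : I < B) (hC0 : 0 < C) (hCB : C < B) :
    |p * C * I - m * C - d * C - μ * C| ≤ p * B * B + (m + d + μ) * B := by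
  rw [abs_le]
  constructor <;>
    nlinarith [mul_lt_mul'' hCB hIB hC0.le hI0.le, mul_pos hC0 hI0]
set_option maxHeartbeats 1000000 in
/-- If `ℛ₀ > 1 + c(m+d+μ)/(μp)`, the interior equilibrium
`E* = (S*, I*, C*, M*, R*)` of the simplified SICMR system is globally
asymptotically stable in the interior of `Ω`: every solution whose initial
value has all coordinates strictly positive and sum `< α/μ` converges to `E*`
as `t → ∞`. -/
theorem simplified_sicmr_interior_globally_stable
    (α c μ γ p m d q : ℝ)
    (hα : 0 < α) (hc : 0 < c) (hμ : 0 < μ) (hγ : 0 < γ) (hp : 0 < p)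
    (hm : 0 < m) (hd : 0 < d) (hq : 0 < q)
    (R₀ Sstar Istar Cstar Mstar Rstar : ℝ)
    (hR₀ : R₀ = c * α / (μ * (μ + γ)))
    (hR₀gt : R₀ > 1 + c * (m + d + μ) / (μ * p))
    (hIstar : Istar = (m + d + μ) / p)
    (hSstar : Sstar = α / (c * Istar + μ))
    (hCstar : Cstar = μ * (μ + γ) / (p * (c * Istar + μ)) *
      (R₀ - 1 - c * (m + d + μ) / (μ * p)))
    (hMstar : Mstar = m * Cstar / (q + μ))
    (hRstar : Rstar = (q * Mstar + γ * Istar) / μ)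
    (S I C M R : ℝ → ℝ)
    (hS : ∀ t, 0 ≤ t → HasDerivAt S (α - c * S t * I t - μ * S t) t)
    (hI : ∀ t, 0 ≤ t → HasDerivAt I
      (c * S t * I t - p * C t * I t - γ * I t - μ * I t) t)
    (hC : ∀ t, 0 ≤ t → HasDerivAt C
      (p * C t * I t - m * C t - d * C t - μ * C t) t)
    (hM : ∀ t, 0 ≤ t → HasDerivAt M (m * C t - q * M t - μ * M t) t)
    (hR : ∀ t, 0 ≤ t → HasDerivAt R (q * M t + γ * I t - μ * R t) t)
    (h0 : 0 < S 0 ∧ 0 < I 0 ∧ 0 < C 0 ∧ 0 < M 0 ∧ 0 < R 0 ∧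
      S 0 + I 0 + C 0 + M 0 + R 0 < α / μ) :
    Tendsto (fun t => (S t, I t, C t, M t, R t)) atTop
      (nhds (Sstar, Istar, Cstar, Mstar, Rstar)) := by
  obtain ⟨hS0, hI0, hC0, hM0, hR0, hN0⟩ := h0
  -- continuity of the states on [0, ∞)
  have hSc : ∀ t, 0 ≤ t → ContinuousAt S t := fun t ht => (hS t ht).continuousAt
  have hIc : ∀ t, 0 ≤ t → ContinuousAt I t := fun t ht => (hI t ht).continuousAt
  have hCc : ∀ t, 0 ≤ t → ContinuousAt C t := fun t ht => (hC t ht).continuousAt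
  have hMc : ∀ t, 0 ≤ t → ContinuousAt M t := fun t ht => (hM t ht).continuousAt
  have hRc : ∀ t, 0 ≤ t → ContinuousAt R t := fun t ht => (hR t ht).continuousAt
  -- extended (globally continuous) versions
  have hSec : Continuous (fun t => S (max t 0)) := cont_ext hSc
  have hIec : Continuous (fun t => I (max t 0)) := cont_ext hIc
  have hCec : Continuous (fun t => C (max t 0)) := cont_ext hCc
  have hMec : Continuous (fun t => M (max t 0)) := cont_ext hMc
  -- positivity of I
  have hIpos : ∀ t, 0 ≤ t → 0 < I t := by
    apply pos_invariant (u := fun _ => (0:ℝ))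
      (g := fun t => -(c * S (max t 0) - p * C (max t 0) - γ - μ))
    · exact ((((continuous_const.mul hSec).sub (continuous_const.mul hCec)).sub
        continuous_const).sub continuous_const).neg
    · exact continuous_const
    · intro t ht
      have := hI t ht
      convert this using 1
      rw [max_eq_left ht]
      ring
    · intro t _; exact le_rfl
    · exact hI0
  -- positivity of C
  have hCpos : ∀ t, 0 ≤ t → 0 < C t := by
    apply pos_invariant (u := fun _ => (0:ℝ))
      (g := fun t => -(p * I (max t 0) - m - d - μ))
    · exact (((continuous_const.mul hIec).sub continuous_const).sub
        continuous_const |>.sub continuous_const).neg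
    · exact continuous_const
    · intro t ht
      convert hC t ht using 1
      rw [max_eq_left ht]
      ring
    · intro t _; exact le_rfl
    · exact hC0
  -- positivity of S
  have hSpos : ∀ t, 0 ≤ t → 0 < S t := by
    apply pos_invariant (u := fun _ => α)
      (g := fun t => c * I (max t 0) + μ)
    · exact (continuous_const.mul hIec).add continuous_const
    · exact continuous_const
    · intro t ht
      convert hS t ht using 1
      rw [max_eq_left ht]
      ring
    · intro t _; exact hα.le
    · exact hS0
  -- positivity of M
  have hMpos : ∀ t, 0 ≤ t → 0 < M t := by
    apply pos_invariant (u := fun t => m * C (max t 0)) (g := fun _ => q + μ)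
    · exact continuous_const
    · exact continuous_const.mul hCec
    · intro t ht
      convert hM t ht using 1
      rw [max_eq_left ht]
      ring
    · intro t _
      exact mul_nonneg hm.le (hCpos _ (le_max_right t 0)).le
    · exact hM0
  -- positivity of R
  have hRpos : ∀ t, 0 ≤ t → 0 < R t := by
    apply pos_invariant (u := fun t => q * M (max t 0) + γ * I (max t 0)) (g := fun _ => μ)
    · exact continuous_const
    · exact (continuous_const.mul hMec).add (continuous_const.mul hIec)
    · intro t ht
      convert hR t ht using 1
      rw [max_eq_left ht]
    · intro t _
      exact add_nonneg (mul_nonneg hq.le (hMpos _ (le_max_right t 0)).le)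
        (mul_nonneg hγ.le (hIpos _ (le_max_right t 0)).le)
    · exact hR0
  -- bound on total population
  have hNb : ∀ t, 0 ≤ t → S t + I t + C t + M t + R t < α / μ := by
    have key : ∀ t, 0 ≤ t → 0 < α / μ - (S t + I t + C t + M t + R t) := by
      apply pos_invariant (u := fun t => d * C (max t 0)) (g := fun _ => μ)
      · exact continuous_const
      · exact continuous_const.mul hCec
      · intro t ht
        have hsum := ((((hS t ht).add (hI t ht)).add (hC t ht)).add (hM t ht)).add (hR t ht)
        have := hsum.const_sub (α / μ)
        convert this using 1
        · exact rfl
        · exact rfl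
        · exact rfl
        rw [max_eq_left ht]
        field_simp
        ring
      · intro t _
        exact mul_nonneg hd.le (hCpos _ (le_max_right t 0)).le
      · linarith
    intro t ht
    linarith [key t ht]
  -- individual bounds
  set B : ℝ := α / μ with hBdef
  have hB0 : 0 < B := div_pos hα hμ
  have hSb : ∀ t, 0 ≤ t → S t < B := by
    intro t ht
    have := hNb t ht
    have := hIpos t ht; have := hCpos t ht; have := hMpos t ht; have := hRpos t ht
    linarith [hNb t ht]
  have hIb : ∀ t, 0 ≤ t → I t < B := by
    intro t ht
    have := hSpos t ht; have := hCpos t ht; have := hMpos t ht; have := hRpos t ht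
    linarith [hNb t ht]
  have hCb : ∀ t, 0 ≤ t → C t < B := by
    intro t ht
    have := hSpos t ht; have := hIpos t ht; have := hMpos t ht; have := hRpos t ht
    linarith [hNb t ht]
  have hMb : ∀ t, 0 ≤ t → M t < B := by
    intro t ht
    have := hSpos t ht; have := hIpos t ht; have := hCpos t ht; have := hRpos t ht
    linarith [hNb t ht]
  -- equilibrium identities
  have hμγ : 0 < μ + γ := by linarith
  have hIst : 0 < Istar := by rw [hIstar]; positivity
  have hcIμ : 0 < c * Istar + μ := by positivity
  have hSst : 0 < Sstar := by rw [hSstar]; positivity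
  have hCst : 0 < Cstar := by
    rw [hCstar]
    apply mul_pos (by positivity)
    linarith
  have hMst : 0 < Mstar := by rw [hMstar]; positivity
  have e1 : c * Sstar * Istar + μ * Sstar = α := by
    rw [hSstar]
    field_simp
  have e3 : p * Istar = m + d + μ := by
    rw [hIstar]; field_simp
  have e2 : c * Sstar = p * Cstar + γ + μ := by
    rw [hSstar, hCstar, hR₀, hIstar]
    field_simp
    try ring
  have e4 : m * Cstar = (q + μ) * Mstar := by
    rw [hMstar]
    field_simp
    try ring
  have e5 : q * Mstar + γ * Istar = μ * Rstar := by
    rw [hRstar]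
    field_simp
  -- Lyapunov function
  set V : ℝ → ℝ := fun t => (S t - Sstar * Real.log (S t))
      + (I t - Istar * Real.log (I t)) + (C t - Cstar * Real.log (C t)) with hVdef
  set k : ℝ := μ + c * Istar with hkdef
  have hk0 : 0 < k := by positivity
  have hVd : ∀ t, 0 ≤ t → HasDerivAt V (-(k * (S t - Sstar) ^ 2 / S t)) t := by
    intro t ht
    have hSne : S t ≠ 0 := (hSpos t ht).ne'
    have hIne : I t ≠ 0 := (hIpos t ht).ne'
    have hCne : C t ≠ 0 := (hCpos t ht).ne'
    have d1 := (hS t ht).sub (((hS t ht).log hSne).const_mul Sstar)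
    have d2 := (hI t ht).sub (((hI t ht).log hIne).const_mul Istar)
    have d3 := (hC t ht).sub (((hC t ht).log hCne).const_mul Cstar)
    have := (d1.add d2).add d3
    convert this using 1
    · exact rfl
    · exact rfl
    · exact rfl
    rw [hkdef]
    rw [← lyap_identity α c μ γ p m d Sstar Istar Cstar (S t) (I t) (C t)
      hSne hIne hCne e1 e2 e3]
    try ring
  -- V is bounded below
  have hVlb : ∀ t, 0 ≤ t → (Sstar - Sstar * Real.log Sstar)
      + (Istar - Istar * Real.log Istar) + (Cstar - Cstar * Real.log Cstar) ≤ V t := by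
    intro t ht
    have l1 := entropy_lb (hSpos t ht) hSst
    have l2 := entropy_lb (hIpos t ht) hIst
    have l3 := entropy_lb (hCpos t ht) hCst
    simp only [hVdef]
    linarith
  set Vlow : ℝ := (Sstar - Sstar * Real.log Sstar)
      + (Istar - Istar * Real.log Istar) + (Cstar - Cstar * Real.log Cstar) with hVlowdef
  -- integral bound on squared deviation
  set w : ℝ → ℝ := fun t => (S t - Sstar) ^ 2 with hwdef
  have hwc : ∀ t, 0 ≤ t → ContinuousAt w t := by
    intro t ht
    exact (((hSc t ht).sub continuousAt_const).pow 2)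
  have hVintc : ∀ a b : ℝ, 0 ≤ a → 0 ≤ b →
      IntervalIntegrable (fun s => -(k * (S s - Sstar) ^ 2 / S s)) volume a b := by
    intro a b ha hb
    apply ContinuousOn.intervalIntegrable
    intro x hx
    have hx0 : (0:ℝ) ≤ x := by
      rcases le_total a b with h | h
      · rw [uIcc_of_le h] at hx; linarith [hx.1]
      · rw [uIcc_of_ge h] at hx; linarith [hx.1]
    exact ((((continuousAt_const.mul (((hSc x hx0).sub continuousAt_const).pow 2)).div
      (hSc x hx0) (hSpos x hx0).ne')).neg).continuousWithinAt
  have hwint : ∀ t, 0 ≤ t → (∫ s in (0:ℝ)..t, w s) ≤ (V 0 - Vlow) * (B / k) := by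
    intro t ht
    have hftc : (∫ s in (0:ℝ)..t, -(k * (S s - Sstar) ^ 2 / S s)) = V t - V 0 := by
      apply integral_eq_sub_of_hasDerivAt
      · intro u hu
        rw [uIcc_of_le ht] at hu
        exact hVd u hu.1
      · exact hVintc 0 t le_rfl ht
    -- pointwise: w s * (k/B) ≤ k * (S s - Sstar)^2 / S s for s ∈ [0,t]
    have hmono : (∫ s in (0:ℝ)..t, w s * (k / B))
        ≤ ∫ s in (0:ℝ)..t, k * (S s - Sstar) ^ 2 / S s := by
      apply intervalIntegral.integral_mono_on ht
      · apply ContinuousOn.intervalIntegrable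
        intro x hx
        rw [uIcc_of_le ht] at hx
        exact ((hwc x hx.1).mul continuousAt_const).continuousWithinAt
      · apply ContinuousOn.intervalIntegrable
        intro x hx
        rw [uIcc_of_le ht] at hx
        exact ((continuousAt_const.mul (((hSc x hx.1).sub continuousAt_const).pow 2)).div
          (hSc x hx.1) (hSpos x hx.1).ne').continuousWithinAt
      · intro u hu
        have hu0 := hu.1
        have hSu := hSpos u hu0
        have hSuB := hSb u hu0
        show (S u - Sstar) ^ 2 * (k / B) ≤ k * (S u - Sstar) ^ 2 / S u
        have hexp : k * (S u - Sstar) ^ 2 / S u - (S u - Sstar) ^ 2 * (k / B)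
            = k * ((S u - Sstar) ^ 2 * B - (S u - Sstar) ^ 2 * S u) / (S u * B) := by
          field_simp
        have hnn : 0 ≤ k * ((S u - Sstar) ^ 2 * B - (S u - Sstar) ^ 2 * S u) / (S u * B) := by
          apply div_nonneg
          · apply mul_nonneg hk0.le
            nlinarith [sq_nonneg (S u - Sstar)]
          · positivity
        linarith [hexp ▸ hnn]
    have hcm : (∫ s in (0:ℝ)..t, w s * (k / B)) = (∫ s in (0:ℝ)..t, w s) * (k / B) :=
      intervalIntegral.integral_mul_const _ _
    have hneg : (∫ s in (0:ℝ)..t, k * (S s - Sstar) ^ 2 / S s) = -(V t - V 0) := by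
      rw [← hftc]
      rw [← intervalIntegral.integral_neg]
      congr 1
      funext s
      ring
    have hVb := hVlb t ht
    have hkB : 0 < k / B := by positivity
    have : (∫ s in (0:ℝ)..t, w s) * (k / B) ≤ V 0 - Vlow := by
      rw [← hcm]
      calc (∫ s in (0:ℝ)..t, w s * (k / B))
          ≤ -(V t - V 0) := hmono.trans_eq hneg
        _ ≤ V 0 - Vlow := by linarith
    calc (∫ s in (0:ℝ)..t, w s) = ((∫ s in (0:ℝ)..t, w s) * (k / B)) * (B / k) := by
          field_simp
      _ ≤ (V 0 - Vlow) * (B / k) := by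
          apply mul_le_mul_of_nonneg_right this (by positivity)
  -- derivative bounds
  set BS : ℝ := α + c * B * B + μ * B with hBSdef
  set BI : ℝ := c * B * B + p * B * B + γ * B + μ * B with hBIdef
  set BC : ℝ := p * B * B + (m + d + μ) * B with hBCdef
  have hS'b : ∀ t, 0 ≤ t → |α - c * S t * I t - μ * S t| ≤ BS :=
    fun t ht => abs_bound_S' hα hc hμ (hSpos t ht) (hSb t ht) (hIpos t ht) (hIb t ht)
  have hI'b : ∀ t, 0 ≤ t → |c * S t * I t - p * C t * I t - γ * I t - μ * I t| ≤ BI :=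
    fun t ht => abs_bound_I' hc hp hγ hμ (hSpos t ht) (hSb t ht) (hIpos t ht) (hIb t ht)
      (hCpos t ht) (hCb t ht)
  have hC'b : ∀ t, 0 ≤ t → |p * C t * I t - m * C t - d * C t - μ * C t| ≤ BC :=
    fun t ht => abs_bound_C' hp hm hd hμ (hIpos t ht) (hIb t ht) (hCpos t ht) (hCb t ht)
  -- w is Lipschitz on [0,∞)
  have hwd : ∀ t, 0 ≤ t → HasDerivAt w
      (2 * (S t - Sstar) * (α - c * S t * I t - μ * S t)) t := by
    intro t ht
    have := ((hS t ht).sub_const Sstar).pow 2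
    convert this using 1
    · exact rfl
    · exact rfl
    · exact rfl
    push_cast
    ring
  have hwlip : ∀ s t, 0 ≤ s → 0 ≤ t → |w t - w s| ≤ (2 * (B + Sstar) * BS) * |t - s| := by
    apply lip_of_deriv hwd
    intro t ht
    rw [abs_mul]
    have a1 : |2 * (S t - Sstar)| ≤ 2 * (B + Sstar) := by
      rw [abs_le]
      have h1 := hSpos t ht; have h2 := hSb t ht
      constructor
      · linarith
      · linarith
    have a2 := hS'b t ht
    have hBS0 : 0 ≤ BS := le_trans (abs_nonneg _) (hS'b 0 le_rfl)
    exact mul_le_mul a1 a2 (abs_nonneg _) (by positivity)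
  -- (S - S*)² → 0, hence S → S*
  have hwtend : Tendsto w atTop (nhds 0) :=
    barbalat_int hwc (fun t _ => sq_nonneg _) hwlip hwint
  have hStend : Tendsto S atTop (nhds Sstar) := by
    have h1 : Tendsto (fun t => Real.sqrt (w t)) atTop (nhds (Real.sqrt 0)) :=
      (Real.continuous_sqrt.continuousAt.tendsto).comp hwtend
    have h2 : Tendsto (fun t => |S t - Sstar|) atTop (nhds 0) := by
      have heq : (fun t => Real.sqrt (w t)) = fun t => |S t - Sstar| := by
        funext u
        rw [hwdef]
        exact Real.sqrt_sq_eq_abs _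
      rw [heq, Real.sqrt_zero] at h1
      exact h1
    rw [tendsto_iff_dist_tendsto_zero]
    simpa [Real.dist_eq] using h2
  -- S' → 0 via Barbalat
  set f1 : ℝ → ℝ := fun t => α - c * S t * I t - μ * S t with hf1def
  have hf1d : ∀ t, 0 ≤ t → HasDerivAt f1
      (-(c * ((α - c * S t * I t - μ * S t) * I t
        + S t * (c * S t * I t - p * C t * I t - γ * I t - μ * I t))
        + μ * (α - c * S t * I t - μ * S t))) t := by
    intro t ht
    have h1 := ((hS t ht).mul (hI t ht)).const_mul c
    have h2 := (hS t ht).const_mul μ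
    have h3 := (h1.add h2).const_sub α
    have heq : f1 = fun t => α - (c * (S t * I t) + μ * S t) := by
      funext u; rw [hf1def]; ring
    rw [heq]
    exact h3
  have hBS0 : 0 ≤ BS := le_trans (abs_nonneg _) (hS'b 0 le_rfl)
  have hBI0 : 0 ≤ BI := le_trans (abs_nonneg _) (hI'b 0 le_rfl)
  have hBC0 : 0 ≤ BC := le_trans (abs_nonneg _) (hC'b 0 le_rfl)
  have hf1lip : ∀ s t, 0 ≤ s → 0 ≤ t →
      |f1 t - f1 s| ≤ (c * (BS * B + B * BI) + μ * BS) * |t - s| := by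
    apply lip_of_deriv hf1d
    intro t ht
    rw [abs_neg]
    have b1 : |(α - c * S t * I t - μ * S t) * I t| ≤ BS * B := by
      rw [abs_mul]
      apply mul_le_mul (hS'b t ht) _ (abs_nonneg _) hBS0
      rw [abs_of_pos (hIpos t ht)]
      exact (hIb t ht).le
    have b2 : |S t * (c * S t * I t - p * C t * I t - γ * I t - μ * I t)| ≤ B * BI := by
      rw [abs_mul]
      apply mul_le_mul _ (hI'b t ht) (abs_nonneg _) hB0.le
      rw [abs_of_pos (hSpos t ht)]
      exact (hSb t ht).le
    calc |c * ((α - c * S t * I t - μ * S t) * I t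
          + S t * (c * S t * I t - p * C t * I t - γ * I t - μ * I t))
          + μ * (α - c * S t * I t - μ * S t)|
        ≤ |c * ((α - c * S t * I t - μ * S t) * I t
          + S t * (c * S t * I t - p * C t * I t - γ * I t - μ * I t))|
          + |μ * (α - c * S t * I t - μ * S t)| := abs_add_le _ _
      _ ≤ c * (BS * B + B * BI) + μ * BS := by
          rw [abs_mul, abs_mul, abs_of_pos hc, abs_of_pos hμ]
          have b3 : |(α - c * S t * I t - μ * S t) * I t
              + S t * (c * S t * I t - p * C t * I t - γ * I t - μ * I t)|
              ≤ BS * B + B * BI := le_trans (abs_add_le _ _) (by linarith)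
          have b4 := hS'b t ht
          have := mul_le_mul_of_nonneg_left b3 hc.le
          have := mul_le_mul_of_nonneg_left b4 hμ.le
          linarith
  have hf1tend : Tendsto f1 atTop (nhds 0) :=
    barbalat_deriv (f := S) (f' := f1) (fun t ht => hS t ht) hf1lip hStend
  -- c S I → c S* I*
  have hcSI : Tendsto (fun t => c * (S t * I t)) atTop (nhds (c * Sstar * Istar)) := by
    have heq : (fun t => c * (S t * I t)) = fun t => α - μ * S t - f1 t := by
      funext u; rw [hf1def]; ring
    rw [heq]
    have h1 : Tendsto (fun t => α - μ * S t - f1 t) atTop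
        (nhds (α - μ * Sstar - 0)) :=
      (tendsto_const_nhds.sub (hStend.const_mul μ)).sub hf1tend
    have hval : c * Sstar * Istar = α - μ * Sstar - 0 := by linarith [e1]
    rw [hval]
    exact h1
  have hItend : Tendsto I atTop (nhds Istar) := by
    have hne : c * Sstar ≠ 0 := by positivity
    have h2 : Tendsto (fun t => c * S t) atTop (nhds (c * Sstar)) := hStend.const_mul c
    have h3 := hcSI.div h2 hne
    have hval : c * Sstar * Istar / (c * Sstar) = Istar := mul_div_cancel_left₀ _ hne
    rw [hval] at h3
    apply h3.congr'
    filter_upwards [eventually_ge_atTop (0:ℝ)] with t ht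
    simp only [Pi.div_apply]
    field_simp [(hSpos t ht).ne', hc.ne']
  -- log I and Barbalat again, to get C → C*
  set g2 : ℝ → ℝ := fun t => c * S t - p * C t - γ - μ with hg2def
  have hg2d : ∀ t, 0 ≤ t → HasDerivAt (fun t => Real.log (I t)) (g2 t) t := by
    intro t ht
    have := (hI t ht).log (hIpos t ht).ne'
    convert this using 1
    rw [hg2def]
    field_simp [(hIpos t ht).ne']
  have hg2d' : ∀ t, 0 ≤ t → HasDerivAt g2
      (c * (α - c * S t * I t - μ * S t)
        - p * (p * C t * I t - m * C t - d * C t - μ * C t)) t := by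
    intro t ht
    have h1 := (hS t ht).const_mul c
    have h2 := (hC t ht).const_mul p
    have h3 := (h1.sub h2).sub_const (γ + μ)
    have heq : g2 = fun t => (c * S t - p * C t) - (γ + μ) := by
      funext u; rw [hg2def]; ring
    rw [heq]
    exact h3
  have hg2lip : ∀ s t, 0 ≤ s → 0 ≤ t →
      |g2 t - g2 s| ≤ (c * BS + p * BC) * |t - s| := by
    apply lip_of_deriv hg2d'
    intro t ht
    calc |c * (α - c * S t * I t - μ * S t)
          - p * (p * C t * I t - m * C t - d * C t - μ * C t)|
        ≤ |c * (α - c * S t * I t - μ * S t)|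
          + |p * (p * C t * I t - m * C t - d * C t - μ * C t)| := abs_sub _ _
      _ ≤ c * BS + p * BC := by
          rw [abs_mul, abs_mul, abs_of_pos hc, abs_of_pos hp]
          have := mul_le_mul_of_nonneg_left (hS'b t ht) hc.le
          have := mul_le_mul_of_nonneg_left (hC'b t ht) hp.le
          linarith
  have hlogItend : Tendsto (fun t => Real.log (I t)) atTop (nhds (Real.log Istar)) :=
    ((Real.continuousAt_log hIst.ne').tendsto).comp hItend
  have hg2tend : Tendsto g2 atTop (nhds 0) :=
    barbalat_deriv hg2d hg2lip hlogItend
  have hCtend : Tendsto C atTop (nhds Cstar) := by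
    have hpC : Tendsto (fun t => p * C t) atTop (nhds (p * Cstar)) := by
      have heq : (fun t => p * C t) = fun t => c * S t - γ - μ - g2 t := by
        funext u; rw [hg2def]; ring
      rw [heq]
      have h1 : Tendsto (fun t => c * S t - γ - μ - g2 t) atTop
          (nhds (c * Sstar - γ - μ - 0)) :=
        (((hStend.const_mul c).sub_const γ).sub_const μ).sub hg2tend
      have hval : p * Cstar = c * Sstar - γ - μ - 0 := by linarith [e2]
      rw [hval]
      exact h1
    have h3 := hpC.div_const p
    have hval : p * Cstar / p = Cstar := by field_simp
    rw [hval] at h3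
    apply h3.congr
    intro t
    field_simp
  -- M → M* via the linear lemma
  have hM0' : Tendsto (fun t => M t - Mstar) atTop (nhds 0) := by
    apply lin_conv (a := q + μ) (e := fun t => m * (C t - Cstar)) (by linarith)
    · intro t ht
      exact continuousAt_const.mul ((hCc t ht).sub continuousAt_const)
    · intro t ht
      exact (hMc t ht).sub continuousAt_const
    · intro t ht
      have := (hM t ht).sub_const Mstar
      convert this using 1
      · exact rfl
      · exact rfl
      linear_combination -e4
    · have h1 : Tendsto (fun t => m * (C t - Cstar)) atTop (nhds (m * (Cstar - Cstar))) :=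
        (hCtend.sub tendsto_const_nhds).const_mul m
      simpa using h1
  have hMtend : Tendsto M atTop (nhds Mstar) := by
    have := hM0'.add (tendsto_const_nhds (x := Mstar))
    simpa using this
  -- R → R* via the linear lemma
  have hR0' : Tendsto (fun t => R t - Rstar) atTop (nhds 0) := by
    apply lin_conv (a := μ)
      (e := fun t => q * (M t - Mstar) + γ * (I t - Istar)) hμ
    · intro t ht
      exact (continuousAt_const.mul ((hMc t ht).sub continuousAt_const)).add
        (continuousAt_const.mul ((hIc t ht).sub continuousAt_const))
    · intro t ht
      exact (hRc t ht).sub continuousAt_const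
    · intro t ht
      have := (hR t ht).sub_const Rstar
      convert this using 1
      · exact rfl
      · exact rfl
      linear_combination -e5
    · have h1 : Tendsto (fun t => q * (M t - Mstar)) atTop (nhds (q * (Mstar - Mstar))) :=
        (hMtend.sub tendsto_const_nhds).const_mul q
      have h2 : Tendsto (fun t => γ * (I t - Istar)) atTop (nhds (γ * (Istar - Istar))) :=
        (hItend.sub tendsto_const_nhds).const_mul γ
      have h3 := h1.add h2
      simpa using h3
  have hRtend : Tendsto R atTop (nhds Rstar) := by
    have := hR0'.add (tendsto_const_nhds (x := Rstar))
    simpa using this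
  exact hStend.prodMk_nhds (hItend.prodMk_nhds (hCtend.prodMk_nhds
    (hMtend.prodMk_nhds hRtend)))
end

section
/- Let α, c, μ, γ, p, m, d, q be positive reals and let S*, I*, C* > 0 satisfy the interior-equilibrium relations of the simplified SICMR system: α = cS*I* + μS*, γ + μ = cS* − pC*, and m + d + μ = pI*. Then for all S ≥ 0, I > 0, C > 0, the derivative of the Lyapunov function 𝒱₂ = (1/2)(S − S*)² + S*(I − I* − I*·ln(I/I*) + C − C* − C*·ln(C/C*)) along the simplified SICMR flow satisfies (S − S*)(α − cSI − μS) + S*·((I − I*)/I)·(cSI − pCI − (γ+μ)I) + S*·((C − C*)/C)·(pCI − (m+d+μ)C) ≤ 0, with equality only when S = S*. -/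
/-- For the simplified SICMR system with interior-equilibrium
relations `α = cS*I* + μS*`, `γ + μ = cS* − pC*`, `m + d + μ = pI*`, the
derivative of the Volterra-type Lyapunov function
`𝒱₂ = ½(S−S*)² + S*(I − I* − I*ln(I/I*) + C − C* − C*ln(C/C*))`
along the flow, namely
`(S−S*)(α − cSI − μS) + S*((I−I*)/I)(cSI − pCI − (γ+μ)I)
  + S*((C−C*)/C)(pCI − (m+d+μ)C)`,
is `≤ 0` for all `S ≥ 0`, `I > 0`, `C > 0`, with equality only when `S = S*`. -/
theorem simplified_sicmr_lyapunov_V2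
    (α c μ γ p m d q : ℝ)
    (hα : 0 < α) (hc : 0 < c) (hμ : 0 < μ) (hγ : 0 < γ) (hp : 0 < p)
    (hm : 0 < m) (hd : 0 < d) (hq : 0 < q)
    (Sstar Istar Cstar : ℝ)
    (hSstar : 0 < Sstar) (hIstar : 0 < Istar) (hCstar : 0 < Cstar)
    (h1 : α = c * Sstar * Istar + μ * Sstar)
    (h2 : γ + μ = c * Sstar - p * Cstar)
    (h3 : m + d + μ = p * Istar)
    (S I C : ℝ) (hS : 0 ≤ S) (hI : 0 < I) (hC : 0 < C) :
    (S - Sstar) * (α - c * S * I - μ * S) +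
      Sstar * ((I - Istar) / I) * (c * S * I - p * C * I - (γ + μ) * I) +
      Sstar * ((C - Cstar) / C) * (p * C * I - (m + d + μ) * C) ≤ 0 ∧
    ((S - Sstar) * (α - c * S * I - μ * S) +
      Sstar * ((I - Istar) / I) * (c * S * I - p * C * I - (γ + μ) * I) +
      Sstar * ((C - Cstar) / C) * (p * C * I - (m + d + μ) * C) = 0 →
      S = Sstar) := by
  have key : (S - Sstar) * (α - c * S * I - μ * S) +
      Sstar * ((I - Istar) / I) * (c * S * I - p * C * I - (γ + μ) * I) +
      Sstar * ((C - Cstar) / C) * (p * C * I - (m + d + μ) * C)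
      = -((μ + c * I) * (S - Sstar) ^ 2) := by
    rw [h1, h2, h3]
    field_simp
    ring
  rw [key]
  have hpos : 0 < μ + c * I := by positivity
  constructor
  · nlinarith [sq_nonneg (S - Sstar)]
  · intro h
    have : (S - Sstar) ^ 2 = 0 := by
      have := mul_eq_zero.mp (by linarith : (μ + c * I) * (S - Sstar) ^ 2 = 0)
      rcases this with h' | h'
      · exact absurd h' (ne_of_gt hpos)
      · exact h'
    have := pow_eq_zero_iff (n := 2) (by norm_num) |>.mp this
    linarith
end
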